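/- Let F be a field, γ ∈ F, A_1,...,A_n l×l matrices with A_i^s = γ^i I, and C_1,...,C_n ∈ F^l with ∑_{i=1}^n A_i^t C_i = 0 for t ∈ {0,...,r-1}, where r ≥ h·s. Let E = {i_1,...,i_h} ⊆ {1,...,n}. Then for all m ∈ {0,...,r - h·s - 1}: ∑_{j ∉ E} (∏_{k=1}^h (γ^j - γ^{i_k})) A_j^m C_j = 0. -/

import Mathlib

/-- Lemma 5 (lnoh): if `A_i^s = γ^i I` and `∑_i A_i^t C_i = 0` for `t < r`, then
for any set `E` of `h` failed nodes and any `m` with `m + h·s < r`,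
`∑_{j ∉ E} (∏_{k ∈ E} (γ^j - γ^k)) A_j^m C_j = 0`. -/
theorem stmt_12 (F : Type*) [Field F] (n l s r h : ℕ) (hh : 1 ≤ h)
    (hr : h * s ≤ r) (γ : F)
    (A : Fin n → Matrix (Fin l) (Fin l) F)
    (hA : ∀ i : Fin n, A i ^ s = γ ^ (i.val + 1) • (1 : Matrix (Fin l) (Fin l) F))
    (C : Fin n → Fin l → F)
    (hC : ∀ t < r, ∑ i, (A i ^ t).mulVec (C i) = 0)
    (E : Finset (Fin n)) (hE : E.card = h) :
    ∀ m, m + h * s < r →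
      ∑ j ∈ Eᶜ, (∏ k ∈ E, (γ ^ (j.val + 1) - γ ^ (k.val + 1))) •
        (A j ^ m).mulVec (C j) = 0 := by
  intro m hm
  classical
  set P : Polynomial F := ∏ k ∈ E, (Polynomial.X - Polynomial.C (γ ^ (k.val + 1)))
    with hPdef
  have hdeg : P.natDegree = h := by
    rw [hPdef, Polynomial.natDegree_prod_of_monic _ _
      (fun k _ => Polynomial.monic_X_sub_C _)]
    simp only [Polynomial.natDegree_X_sub_C]
    simp [hE]
  have heval : ∀ j : Fin n,
      P.eval (γ ^ (j.val + 1)) = ∏ k ∈ E, (γ ^ (j.val + 1) - γ ^ (k.val + 1)) := by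
    intro j; simp [hPdef, Polynomial.eval_prod]
  -- each term rewrites as a sum over coefficients
  have h1 : ∀ j : Fin n, P.eval (γ ^ (j.val + 1)) • (A j ^ m).mulVec (C j)
      = ∑ p ∈ Finset.range (h + 1), P.coeff p • ((A j ^ (m + p * s)).mulVec (C j)) := by
    intro j
    have he : P.eval (γ ^ (j.val + 1))
        = ∑ p ∈ Finset.range (h + 1), P.coeff p * (γ ^ (j.val + 1)) ^ p := by
      conv_lhs => rw [Polynomial.eval_eq_sum_range' (n := h + 1) (by rw [hdeg]; omega)]
    rw [he, Finset.sum_smul]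
    refine Finset.sum_congr rfl fun p _ => ?_
    rw [mul_smul]
    congr 1
    have hpow : A j ^ (m + p * s) = (γ ^ (j.val + 1)) ^ p • A j ^ m := by
      rw [pow_add, pow_mul', hA, smul_pow, one_pow, Matrix.mul_smul, Matrix.mul_one]
    rw [hpow, Matrix.smul_mulVec]
  have hfull : ∑ j : Fin n, P.eval (γ ^ (j.val + 1)) • (A j ^ m).mulVec (C j) = 0 := by
    calc ∑ j : Fin n, P.eval (γ ^ (j.val + 1)) • (A j ^ m).mulVec (C j)
        = ∑ j : Fin n, ∑ p ∈ Finset.range (h + 1),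
            P.coeff p • ((A j ^ (m + p * s)).mulVec (C j)) := by
          exact Finset.sum_congr rfl fun j _ => h1 j
      _ = ∑ p ∈ Finset.range (h + 1), P.coeff p •
            ∑ j : Fin n, (A j ^ (m + p * s)).mulVec (C j) := by
          rw [Finset.sum_comm]
          exact Finset.sum_congr rfl fun p _ => (Finset.smul_sum).symm
      _ = 0 := by
          refine Finset.sum_eq_zero fun p hp => ?_
          have hp' : p ≤ h := Nat.lt_succ_iff.mp (Finset.mem_range.mp hp)
          have : m + p * s < r := by
            have : p * s ≤ h * s := Nat.mul_le_mul_right s hp'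
            omega
          rw [hC _ this, smul_zero]
  have hsplit : ∑ j : Fin n, P.eval (γ ^ (j.val + 1)) • (A j ^ m).mulVec (C j)
      = (∑ j ∈ E, P.eval (γ ^ (j.val + 1)) • (A j ^ m).mulVec (C j))
        + ∑ j ∈ Eᶜ, P.eval (γ ^ (j.val + 1)) • (A j ^ m).mulVec (C j) := by
    rw [← Finset.sum_add_sum_compl E]
  have hEzero : ∑ j ∈ E, P.eval (γ ^ (j.val + 1)) • (A j ^ m).mulVec (C j) = 0 := by
    refine Finset.sum_eq_zero fun j hj => ?_
    rw [heval, Finset.prod_eq_zero hj (by ring), zero_smul]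
  have : ∑ j ∈ Eᶜ, P.eval (γ ^ (j.val + 1)) • (A j ^ m).mulVec (C j) = 0 := by
    rw [hsplit, hEzero, zero_add] at hfull
    exact hfull
  calc ∑ j ∈ Eᶜ, (∏ k ∈ E, (γ ^ (j.val + 1) - γ ^ (k.val + 1))) •
        (A j ^ m).mulVec (C j)
      = ∑ j ∈ Eᶜ, P.eval (γ ^ (j.val + 1)) • (A j ^ m).mulVec (C j) := by
        exact Finset.sum_congr rfl fun j _ => by rw [heval]
    _ = 0 := this
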